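/- For all real numbers j>0, t>0 and r>0 one has (1/j²)·( j·r·arsinh(j·r/t) − √(t² + (j·r)²) + t ) ≥ (r/j)·( log(j·r/t) − 1 ). Moreover, for any C∈ℝ, if in addition 0 < t ≤ j·e^{−(C+2)}, then (1/j²)·( j·r·arsinh(j·r/t) − √(t² + (j·r)²) + t ) ≥ (r/j)·( log r + C + 1 ). -/

import Mathlib

/-- The exponent in the Davies–Gaffney–Grigor'yan heat kernel estimate:
`ζ_j(t,r) = (1/j²)·( j·r·arsinh(j·r/t) − √(t²+(j·r)²) + t )`. -/
noncomputable def zeta (j t r : ℝ) : ℝ :=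
  (1 / j ^ 2) * (j * r * Real.arsinh (j * r / t) - Real.sqrt (t ^ 2 + (j * r) ^ 2) + t)

lemma zeta_key (j t r : ℝ) (hj : 0 < j) (ht : 0 < t) (hr : 0 < r) :
    (r / j) * (Real.log (j * r / t) - 1) ≤ zeta j t r := by
  have ha : 0 < j * r := mul_pos hj hr
  have hx : 0 < j * r / t := div_pos ha ht
  have h1 : Real.log (j * r / t) ≤ Real.arsinh (j * r / t) := by
    rw [Real.arsinh]
    exact Real.log_le_log hx (le_add_of_nonneg_right (Real.sqrt_nonneg _))
  have h2 : Real.sqrt (t ^ 2 + (j * r) ^ 2) ≤ t + j * r := by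
    have h := Real.sqrt_le_sqrt (show t ^ 2 + (j * r) ^ 2 ≤ (t + j * r) ^ 2 by nlinarith)
    rwa [Real.sqrt_sq (by positivity)] at h
  have h1' : j * r * Real.log (j * r / t) ≤ j * r * Real.arsinh (j * r / t) :=
    mul_le_mul_of_nonneg_left h1 ha.le
  have h : j * r * (Real.log (j * r / t) - 1) ≤
      j * r * Real.arsinh (j * r / t) - Real.sqrt (t ^ 2 + (j * r) ^ 2) + t := by
    nlinarith
  have heq : (r / j) * (Real.log (j * r / t) - 1)
      = (1 / j ^ 2) * (j * r * (Real.log (j * r / t) - 1)) := by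
    field_simp
  rw [heq]
  exact mul_le_mul_of_nonneg_left h (by positivity)

theorem stmt5 :
    (∀ j t r : ℝ, 0 < j → 0 < t → 0 < r →
      (r / j) * (Real.log (j * r / t) - 1) ≤ zeta j t r) ∧
    (∀ j t r C : ℝ, 0 < j → 0 < r → 0 < t → t ≤ j * Real.exp (-(C + 2)) →
      (r / j) * (Real.log r + C + 1) ≤ zeta j t r) := by
  constructor
  · exact fun j t r hj ht hr => zeta_key j t r hj ht hr
  · intro j t r C hj hr ht hle
    refine le_trans ?_ (zeta_key j t r hj ht hr)
    have hlogt : Real.log t ≤ Real.log j + (-(C + 2)) := by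
      calc Real.log t ≤ Real.log (j * Real.exp (-(C + 2))) := Real.log_le_log ht hle
        _ = Real.log j + (-(C + 2)) := by
            rw [Real.log_mul (ne_of_gt hj) (Real.exp_ne_zero _), Real.log_exp]
    have hlog : Real.log r + C + 2 ≤ Real.log (j * r / t) := by
      rw [Real.log_div (by positivity) (ne_of_gt ht), Real.log_mul (ne_of_gt hj) (ne_of_gt hr)]
      linarith
    have : Real.log r + C + 1 ≤ Real.log (j * r / t) - 1 := by linarith
    exact mul_le_mul_of_nonneg_left this (by positivity)
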